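/- Fix real numbers D > 0, L ≥ 2D, and λ > 0, and set a_max = L/(L−D), so that a_{ik} ≤ a_max for all indices. Then for every integer w ≥ 2, E[ ( Σ_{1≤i<j≤w} Σ_{1≤k<l≤w} ( Q_{ijkl} − E[Q_{1212}] ) )² ] ≤ 2 a_max⁸ · (w²(w−1)²/4) · ( (w²(w−1)² − (w−2)²(w−3)²)/4 ). (This uses that Q_{i₁j₁k₁l₁} and Q_{i₂j₂k₂l₂} are independent whenever {i₁,j₁} ∩ {i₂,j₂} = ∅ and {k₁,l₁} ∩ {k₂,l₂} = ∅, that each covariance is at most 2 a_max⁸ in absolute value, and that for each fixed (i₁,j₁,k₁,l₁) at least (w−2)²(w−3)²/4 of the w²(w−1)²/4 index quadruples (i₂<j₂, k₂<l₂) in {1,...,w} are disjoint from it in both coordinates.) -/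

import Mathlib

open MeasureTheory

noncomputable section

/-- The random variable
`Q_{ijkl} = a_{ik} a_{il} a_{jk} a_{jl} cos((2π/λ)(d_{ik} - d_{il} - d_{jk} + d_{jl}))`
where `d_{ik} = ‖s_i - u_k‖` and `a_{ik} = L / d_{ik}`. -/
def Q {Ω : Type*} (L lam : ℝ) (u s : ℕ → Ω → EuclideanSpace ℝ (Fin 2))
    (i j k l : ℕ) (ω : Ω) : ℝ :=
  (L / dist (s i ω) (u k ω)) * (L / dist (s i ω) (u l ω)) *
    (L / dist (s j ω) (u k ω)) * (L / dist (s j ω) (u l ω)) *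
    Real.cos ((2 * Real.pi / lam) *
      (dist (s i ω) (u k ω) - dist (s i ω) (u l ω) -
        dist (s j ω) (u k ω) + dist (s j ω) (u l ω)))

namespace SecondMomentAux

lemma pair_card_aux (s : Finset ℕ) :
    2 * ((s ×ˢ s).filter fun p => p.1 < p.2).card = s.card * s.card - s.card := by
  classical
  have hswap : ((s ×ˢ s).filter fun p => p.2 < p.1).card
      = ((s ×ˢ s).filter fun p => p.1 < p.2).card := by
    apply Finset.card_nbij' (i := Prod.swap) (j := Prod.swap) <;>
      simp +contextual [Set.MapsTo, Set.LeftInvOn, Set.RightInvOn, Set.EqOn, Finset.mem_filter, Finset.mem_product, and_comm]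
  have hunion : s.offDiag = ((s ×ˢ s).filter fun p => p.1 < p.2) ∪
      ((s ×ˢ s).filter fun p => p.2 < p.1) := by
    rw [← Finset.filter_or]
    ext p
    simp only [Finset.mem_offDiag, Finset.mem_filter, Finset.mem_product,
      ne_iff_lt_or_gt, gt_iff_lt]
    tauto
  have hdisj : Disjoint ((s ×ˢ s).filter fun p => p.1 < p.2)
      ((s ×ˢ s).filter fun p => p.2 < p.1) := by
    rw [Finset.disjoint_left]
    intro p hp hq
    simp only [Finset.mem_filter] at hp hq
    omega
  have := Finset.offDiag_card (s := s)
  rw [hunion, Finset.card_union_of_disjoint hdisj, hswap] at this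
  omega

/-- the finset of increasing pairs in `{1, …, w}` -/
def pairs (w : ℕ) : Finset (ℕ × ℕ) :=
  (Finset.Icc 1 w ×ˢ Finset.Icc 1 w).filter fun p => p.1 < p.2

/-- increasing pairs avoiding `{a, b}` -/
def pairsD (w a b : ℕ) : Finset (ℕ × ℕ) :=
  ((Finset.Icc 1 w \ {a, b}) ×ˢ (Finset.Icc 1 w \ {a, b})).filter fun p => p.1 < p.2

/-- double disjointness of two index quadruples -/
def disjQ (t t' : (ℕ × ℕ) × (ℕ × ℕ)) : Prop :=
  (t.1.1 ≠ t'.1.1 ∧ t.1.1 ≠ t'.1.2 ∧ t.1.2 ≠ t'.1.1 ∧ t.1.2 ≠ t'.1.2) ∧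
    (t.2.1 ≠ t'.2.1 ∧ t.2.1 ≠ t'.2.2 ∧ t.2.2 ≠ t'.2.1 ∧ t.2.2 ≠ t'.2.2)

instance (t t' : (ℕ × ℕ) × (ℕ × ℕ)) : Decidable (disjQ t t') := by
  unfold disjQ; infer_instance

lemma card_pairs (w : ℕ) : 2 * (pairs w).card = w * w - w := by
  have := pair_card_aux (Finset.Icc 1 w)
  simpa [pairs, Nat.card_Icc] using this

lemma card_pairsD (w a b : ℕ) (ha : a ∈ Finset.Icc 1 w) (hb : b ∈ Finset.Icc 1 w)
    (hab : a ≠ b) : 2 * (pairsD w a b).card = (w - 2) * (w - 2) - (w - 2) := by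
  have hsub : ({a, b} : Finset ℕ) ⊆ Finset.Icc 1 w := by
    intro x hx
    rcases Finset.mem_insert.mp hx with rfl | hx
    · exact ha
    · rcases Finset.mem_singleton.mp hx with rfl
      exact hb
  have hcard : (Finset.Icc 1 w \ {a, b}).card = w - 2 := by
    rw [Finset.card_sdiff_of_subset hsub, Finset.card_pair hab, Nat.card_Icc]
    omega
  have := pair_card_aux (Finset.Icc 1 w \ {a, b})
  rw [hcard] at this
  simpa [pairsD] using this

lemma pairsD_subset (w a b : ℕ) : pairsD w a b ⊆ pairs w :=
  Finset.filter_subset_filter _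
    (Finset.product_subset_product Finset.sdiff_subset Finset.sdiff_subset)

lemma subset_disj (w : ℕ) (t : (ℕ × ℕ) × (ℕ × ℕ)) :
    pairsD w t.1.1 t.1.2 ×ˢ pairsD w t.2.1 t.2.2
      ⊆ (pairs w ×ˢ pairs w).filter fun t' => disjQ t t' := by
  intro x hx
  simp only [pairsD, pairs, Finset.mem_product, Finset.mem_filter, Finset.mem_sdiff,
    Finset.mem_insert, Finset.mem_singleton] at hx ⊢
  simp only [disjQ]
  obtain ⟨⟨⟨⟨h1a, h1b⟩, h2a, h2b⟩, hlt1⟩, ⟨⟨⟨h3a, h3b⟩, h4a, h4b⟩, hlt2⟩⟩ := hx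
  refine ⟨⟨⟨⟨h1a, h2a⟩, hlt1⟩, ⟨⟨h3a, h4a⟩, hlt2⟩⟩,
    ⟨⟨?_, ?_, ?_, ?_⟩, ⟨?_, ?_, ?_, ?_⟩⟩⟩ <;> omega

lemma count_bound (w : ℕ) (hw : 2 ≤ w) (t : (ℕ × ℕ) × (ℕ × ℕ))
    (ht : t ∈ pairs w ×ˢ pairs w) :
    ((pairs w ×ˢ pairs w).filter fun t' => ¬ disjQ t t').card
      ≤ (pairs w).card * (pairs w).card - (pairsD w 1 2).card * (pairsD w 1 2).card := by
  classical
  have h1 := Finset.card_filter_add_card_filter_not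
    (s := pairs w ×ˢ pairs w) (p := fun t' => disjQ t t')
  have h2 : (pairsD w t.1.1 t.1.2 ×ˢ pairsD w t.2.1 t.2.2).card
      ≤ ((pairs w ×ˢ pairs w).filter fun t' => disjQ t t').card :=
    Finset.card_le_card (subset_disj w t)
  rw [Finset.card_product] at h1 h2
  simp only [pairs, Finset.mem_product, Finset.mem_filter] at ht
  obtain ⟨⟨⟨ht11, ht12⟩, hlt1⟩, ⟨⟨ht21, ht22⟩, hlt2⟩⟩ := ht
  have e1 := card_pairsD w t.1.1 t.1.2 ht11 ht12 (Nat.ne_of_lt hlt1)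
  have e2 := card_pairsD w t.2.1 t.2.2 ht21 ht22 (Nat.ne_of_lt hlt2)
  have h1mem : (1 : ℕ) ∈ Finset.Icc 1 w := by simp; omega
  have h2mem : (2 : ℕ) ∈ Finset.Icc 1 w := by simp [Finset.mem_Icc]; omega
  have e0 := card_pairsD w 1 2 h1mem h2mem (by norm_num)
  have exy1 : (pairsD w t.1.1 t.1.2).card = (pairsD w 1 2).card := by omega
  have exy2 : (pairsD w t.2.1 t.2.2).card = (pairsD w 1 2).card := by omega
  rw [exy1, exy2] at h2
  refine Nat.le_sub_of_add_le ?_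
  calc ((pairs w ×ˢ pairs w).filter fun t' => ¬ disjQ t t').card
        + (pairsD w 1 2).card * (pairsD w 1 2).card
      ≤ ((pairs w ×ˢ pairs w).filter fun t' => ¬ disjQ t t').card
        + ((pairs w ×ˢ pairs w).filter fun t' => disjQ t t').card :=
        Nat.add_le_add_left h2 _
    _ = ((pairs w ×ˢ pairs w).filter fun t' => disjQ t t').card
        + ((pairs w ×ˢ pairs w).filter fun t' => ¬ disjQ t t').card := Nat.add_comm _ _
    _ = (pairs w).card * (pairs w).card := h1


abbrev E2 := EuclideanSpace ℝ (Fin 2)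

/-- `Q` as a function of the quadruple of points. -/
def Qfun (L lam : ℝ) (z : (E2 × E2) × (E2 × E2)) : ℝ :=
  (L / dist z.1.1 z.2.1) * (L / dist z.1.1 z.2.2) *
    (L / dist z.1.2 z.2.1) * (L / dist z.1.2 z.2.2) *
    Real.cos ((2 * Real.pi / lam) *
      (dist z.1.1 z.2.1 - dist z.1.1 z.2.2 - dist z.1.2 z.2.1 + dist z.1.2 z.2.2))

lemma Qfun_measurable (L lam : ℝ) : Measurable (Qfun L lam) := by
  unfold Qfun; fun_prop

lemma Qfun_abs_le {L D lam : ℝ} (hL0 : 0 < L) (hLD : 0 < L - D)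
    {z : (E2 × E2) × (E2 × E2)}
    (h1 : L - D ≤ dist z.1.1 z.2.1) (h2 : L - D ≤ dist z.1.1 z.2.2)
    (h3 : L - D ≤ dist z.1.2 z.2.1) (h4 : L - D ≤ dist z.1.2 z.2.2) :
    |Qfun L lam z| ≤ (L / (L - D)) ^ 4 := by
  have key : ∀ d : ℝ, L - D ≤ d → |L / d| ≤ L / (L - D) := by
    intro d hd
    rw [abs_of_nonneg (div_nonneg hL0.le (by linarith))]
    gcongr
  have hnn : (0:ℝ) ≤ L / (L - D) := div_nonneg hL0.le hLD.le
  have h0 : |Qfun L lam z| = |L / dist z.1.1 z.2.1| * |L / dist z.1.1 z.2.2| *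
      |L / dist z.1.2 z.2.1| * |L / dist z.1.2 z.2.2| *
      |Real.cos ((2 * Real.pi / lam) *
        (dist z.1.1 z.2.1 - dist z.1.1 z.2.2 - dist z.1.2 z.2.1 + dist z.1.2 z.2.2))| := by
    rw [Qfun, abs_mul, abs_mul, abs_mul, abs_mul]
  rw [h0]
  calc |L / dist z.1.1 z.2.1| * |L / dist z.1.1 z.2.2| *
        |L / dist z.1.2 z.2.1| * |L / dist z.1.2 z.2.2| *
        |Real.cos ((2 * Real.pi / lam) *
          (dist z.1.1 z.2.1 - dist z.1.1 z.2.2 - dist z.1.2 z.2.1 + dist z.1.2 z.2.2))|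
      ≤ (L / (L - D)) * (L / (L - D)) * (L / (L - D)) * (L / (L - D)) * 1 := by
        gcongr ?_ * ?_ * ?_ * ?_ * ?_ <;> first
          | exact key _ h1 | exact key _ h2 | exact key _ h3 | exact key _ h4
          | exact Real.abs_cos_le_one _
    _ = (L / (L - D)) ^ 4 := by ring

lemma final_num (w n d : ℕ) (hw : 2 ≤ w) (a : ℝ) (ha : 0 ≤ a)
    (hn : 2 * n = w * w - w) (hd : 2 * d = (w - 2) * (w - 2) - (w - 2)) (hdn : d ≤ n) :
    ((n * n : ℕ) : ℝ) * (((n * n - d * d : ℕ) : ℝ) * (a ^ 4) ^ 2) ≤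
      2 * a ^ 8 * ((w : ℝ) ^ 2 * ((w : ℝ) - 1) ^ 2 / 4) *
        (((w : ℝ) ^ 2 * ((w : ℝ) - 1) ^ 2 - ((w : ℝ) - 2) ^ 2 * ((w : ℝ) - 3) ^ 2) / 4) := by
  have hwle : w ≤ w * w := by nlinarith
  have hw2le : (w - 2) ≤ (w - 2) * (w - 2) := by
    rcases Nat.eq_zero_or_pos (w - 2) with h | h
    · simp [h]
    · exact Nat.le_mul_of_pos_left _ h
  have hnR : 2 * (n : ℝ) = (w : ℝ) * (w : ℝ) - (w : ℝ) := by
    have h2 : ((2 * n : ℕ) : ℝ) = ((w * w - w : ℕ) : ℝ) := by rw [hn]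
    rw [Nat.cast_sub hwle] at h2
    push_cast at h2
    linarith
  have hm2R : ((w - 2 : ℕ) : ℝ) = (w : ℝ) - 2 := by
    rw [Nat.cast_sub hw]; norm_num
  have hdR : 2 * (d : ℝ) = ((w : ℝ) - 2) * ((w : ℝ) - 2) - ((w : ℝ) - 2) := by
    have h2 : ((2 * d : ℕ) : ℝ) = (((w - 2) * (w - 2) - (w - 2) : ℕ) : ℝ) := by rw [hd]
    rw [Nat.cast_sub hw2le] at h2
    push_cast [hm2R] at h2
    linarith
  have hddNN : (d : ℝ) * (d : ℝ) ≤ (n : ℝ) * (n : ℝ) := by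
    have := Nat.mul_le_mul hdn hdn
    exact_mod_cast this
  have hcast1 : ((n * n : ℕ) : ℝ) = (n : ℝ) * (n : ℝ) := by push_cast; ring
  have hcast2 : ((n * n - d * d : ℕ) : ℝ) = (n : ℝ) * (n : ℝ) - (d : ℝ) * (d : ℝ) := by
    rw [Nat.cast_sub (Nat.mul_le_mul hdn hdn)]
    push_cast; ring
  rw [hcast1, hcast2]
  have e1 : (w : ℝ) ^ 2 * ((w : ℝ) - 1) ^ 2 = 4 * (n : ℝ) ^ 2 := by
    calc (w : ℝ) ^ 2 * ((w : ℝ) - 1) ^ 2 = ((w : ℝ) * (w : ℝ) - (w : ℝ)) ^ 2 := by ring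
      _ = (2 * (n : ℝ)) ^ 2 := by rw [← hnR]
      _ = 4 * (n : ℝ) ^ 2 := by ring
  have e2 : ((w : ℝ) - 2) ^ 2 * ((w : ℝ) - 3) ^ 2 = 4 * (d : ℝ) ^ 2 := by
    calc ((w : ℝ) - 2) ^ 2 * ((w : ℝ) - 3) ^ 2
        = (((w : ℝ) - 2) * ((w : ℝ) - 2) - ((w : ℝ) - 2)) ^ 2 := by ring
      _ = (2 * (d : ℝ)) ^ 2 := by rw [← hdR]
      _ = 4 * (d : ℝ) ^ 2 := by ring
  rw [e1, e2]
  have hx : 0 ≤ a ^ 8 * ((n : ℝ) * (n : ℝ)) * ((n : ℝ) * (n : ℝ) - (d : ℝ) * (d : ℝ)) := by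
    apply mul_nonneg (mul_nonneg (by positivity) (by positivity))
    linarith
  nlinarith [hx]

lemma disjoint_quad {i j k l i' j' k' l' : ℕ}
    (d1 : i ≠ i') (d2 : i ≠ j') (d3 : j ≠ i') (d4 : j ≠ j')
    (d5 : k ≠ k') (d6 : k ≠ l') (d7 : l ≠ k') (d8 : l ≠ l') :
    Disjoint ({Sum.inr i, Sum.inr j, Sum.inl k, Sum.inl l} : Finset (ℕ ⊕ ℕ))
      {Sum.inr i', Sum.inr j', Sum.inl k', Sum.inl l'} := by
  simp only [Finset.disjoint_left, Finset.mem_insert, Finset.mem_singleton]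
  rintro x (rfl | rfl | rfl | rfl) h <;> rcases h with h | h | h | h <;> simp_all

lemma sum_pairs_eq {M : Type*} [AddCommMonoid M] (w : ℕ) (g : ℕ → ℕ → M) :
    ∑ i ∈ Finset.Icc 1 w, ∑ j ∈ Finset.Ioc i w, g i j
      = ∑ p ∈ pairs w, g p.1 p.2 := by
  rw [pairs, Finset.sum_filter, Finset.sum_product]
  refine Finset.sum_congr rfl fun i hi => ?_
  rw [← Finset.sum_filter]
  apply Finset.sum_congr _ fun _ _ => rfl
  ext j
  simp only [Finset.mem_Ioc, Finset.mem_filter, Finset.mem_Icc]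
  have hi1 := (Finset.mem_Icc.mp hi).1
  omega

end SecondMomentAux

open SecondMomentAux ProbabilityTheory

set_option maxHeartbeats 1000000 in
theorem second_moment_centered_Q_sum_le
    (D L lam : ℝ) (hD : 0 < D) (hL : 2 * D ≤ L) (hlam : 0 < lam)
    (CT CR : Set (EuclideanSpace ℝ (Fin 2)))
    (hCT : CT = {p | p 0 ∈ Set.Icc 0 D ∧ p 1 ∈ Set.Icc 0 D})
    (hCR : CR = {p | p 0 ∈ Set.Icc L (L + D) ∧ p 1 ∈ Set.Icc 0 D})
    {Ω : Type*} [MeasurableSpace Ω] (μ : Measure Ω) [IsProbabilityMeasure μ]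
    (u s : ℕ → Ω → EuclideanSpace ℝ (Fin 2))
    (humeas : ∀ k, Measurable (u k)) (hsmeas : ∀ i, Measurable (s i))
    (hu : ∀ k, Measure.map (u k) μ = (volume CT)⁻¹ • volume.restrict CT)
    (hs : ∀ i, Measure.map (s i) μ = (volume CR)⁻¹ • volume.restrict CR)
    (hindep : ProbabilityTheory.iIndepFun
      (m := fun _ : ℕ ⊕ ℕ => (inferInstance : MeasurableSpace (EuclideanSpace ℝ (Fin 2))))
      (Sum.elim u s) μ)
    (w : ℕ) (hw : 2 ≤ w) :
    (∫ ω, (∑ i ∈ Finset.Icc 1 w, ∑ j ∈ Finset.Ioc i w,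
        ∑ k ∈ Finset.Icc 1 w, ∑ l ∈ Finset.Ioc k w,
          (Q L lam u s i j k l ω - ∫ ω', Q L lam u s 1 2 1 2 ω' ∂μ)) ^ 2 ∂μ) ≤
      2 * (L / (L - D)) ^ 8 * ((w : ℝ) ^ 2 * ((w : ℝ) - 1) ^ 2 / 4) *
        (((w : ℝ) ^ 2 * ((w : ℝ) - 1) ^ 2 -
          ((w : ℝ) - 2) ^ 2 * ((w : ℝ) - 3) ^ 2) / 4) := by
  classical
  have hL0 : 0 < L := by linarith
  have hLD : 0 < L - D := by linarith
  have hQeq : ∀ i j k l : ℕ, Q L lam u s i j k l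
      = fun ω => Qfun L lam ((s i ω, s j ω), (u k ω, u l ω)) := fun _ _ _ _ => rfl
  simp only [hQeq]
  set m := ∫ ω', Qfun L lam ((s 1 ω', s 2 ω'), (u 1 ω', u 2 ω')) ∂μ with hm
  set A : ℝ := (L / (L - D)) ^ 4 with hA
  have hA0 : (0:ℝ) ≤ A := by positivity
  -- measurability of the squares
  have hCTm : MeasurableSet CT := by
    rw [hCT]
    exact (measurableSet_Icc.preimage (by fun_prop : Measurable fun p : EuclideanSpace ℝ (Fin 2) => p 0)).inter
      (measurableSet_Icc.preimage (by fun_prop : Measurable fun p : EuclideanSpace ℝ (Fin 2) => p 1))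
  have hCRm : MeasurableSet CR := by
    rw [hCR]
    exact (measurableSet_Icc.preimage (by fun_prop : Measurable fun p : EuclideanSpace ℝ (Fin 2) => p 0)).inter
      (measurableSet_Icc.preimage (by fun_prop : Measurable fun p : EuclideanSpace ℝ (Fin 2) => p 1))
  -- a.e. membership
  have huae : ∀ k, ∀ᵐ ω ∂μ, u k ω ∈ CT := by
    intro k
    have h0 : μ.map (u k) CTᶜ = 0 := by
      rw [hu k]; simp [Measure.restrict_apply hCTm.compl]
    have h1 : ∀ᵐ x ∂(μ.map (u k)), x ∈ CT := by
      rw [ae_iff]; exact h0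
    exact (ae_map_iff (humeas k).aemeasurable hCTm).mp h1
  have hsae : ∀ i, ∀ᵐ ω ∂μ, s i ω ∈ CR := by
    intro i
    have h0 : μ.map (s i) CRᶜ = 0 := by
      rw [hs i]; simp [Measure.restrict_apply hCRm.compl]
    have h1 : ∀ᵐ x ∂(μ.map (s i)), x ∈ CR := by
      rw [ae_iff]; exact h0
    exact (ae_map_iff (hsmeas i).aemeasurable hCRm).mp h1
  -- distance lower bound
  have hdistlb : ∀ p ∈ CR, ∀ q ∈ CT, L - D ≤ dist p q := by
    intro p hp q hq
    rw [hCR] at hp; rw [hCT] at hq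
    obtain ⟨⟨hp1, _⟩, _⟩ := hp
    obtain ⟨⟨_, hq2⟩, _⟩ := hq
    have h0 : dist (p 0) (q 0) ≤ dist p q := by
      rw [EuclideanSpace.dist_eq]
      rw [show dist (p 0) (q 0) = Real.sqrt (dist (p 0) (q 0) ^ 2) from
        (Real.sqrt_sq dist_nonneg).symm]
      apply Real.sqrt_le_sqrt
      exact Finset.single_le_sum (f := fun i => dist (p i) (q i) ^ 2)
        (fun i _ => sq_nonneg _) (Finset.mem_univ 0)
    have h1 : L - D ≤ dist (p 0) (q 0) := by
      rw [Real.dist_eq, abs_of_nonneg (by linarith)]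
      linarith
    linarith
  -- measurability
  have hfmeas : ∀ x : ℕ ⊕ ℕ, Measurable (Sum.elim u s x) := by
    rintro (x | x)
    · exact humeas x
    · exact hsmeas x
  have hWmeas : ∀ i j k l : ℕ,
      Measurable (fun ω => ((s i ω, s j ω), (u k ω, u l ω))) := fun i j k l =>
    ((hsmeas i).prodMk (hsmeas j)).prodMk ((humeas k).prodMk (humeas l))
  have hQmeas : ∀ i j k l : ℕ,
      Measurable (fun ω => Qfun L lam ((s i ω, s j ω), (u k ω, u l ω))) := fun i j k l =>
    (Qfun_measurable L lam).comp (hWmeas i j k l)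
  -- a.e. bound on Q
  have haeQ : ∀ i j k l : ℕ, ∀ᵐ ω ∂μ,
      |Qfun L lam ((s i ω, s j ω), (u k ω, u l ω))| ≤ A := by
    intro i j k l
    filter_upwards [hsae i, hsae j, huae k, huae l] with ω a1 a2 a3 a4
    exact Qfun_abs_le hL0 hLD (hdistlb _ a1 _ a3) (hdistlb _ a1 _ a4)
      (hdistlb _ a2 _ a3) (hdistlb _ a2 _ a4)
  have hQint : ∀ i j k l : ℕ,
      Integrable (fun ω => Qfun L lam ((s i ω, s j ω), (u k ω, u l ω))) μ := by
    intro i j k l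
    refine Integrable.mono' (integrable_const A) (hQmeas i j k l).aestronglyMeasurable ?_
    filter_upwards [haeQ i j k l] with ω h
    simpa [Real.norm_eq_abs] using h
  -- identical expectations
  set νT : Measure E2 := (volume CT)⁻¹ • volume.restrict CT with hνT
  set νR : Measure E2 := (volume CR)⁻¹ • volume.restrict CR with hνR
  have hmapW : ∀ i j k l : ℕ, i ≠ j → k ≠ l →
      μ.map (fun ω => ((s i ω, s j ω), (u k ω, u l ω)))
        = (νR.prod νR).prod (νT.prod νT) := by
    intro i j k l hij hkl
    have h1 : IndepFun (fun ω => (s i ω, s j ω)) (fun ω => (u k ω, u l ω)) μ :=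
      hindep.indepFun_prodMk_prodMk hfmeas (Sum.inr i) (Sum.inr j) (Sum.inl k) (Sum.inl l)
        (by simp) (by simp) (by simp) (by simp)
    have h2 : IndepFun (s i) (s j) μ :=
      hindep.indepFun (show (Sum.inr i : ℕ ⊕ ℕ) ≠ Sum.inr j by simp [hij])
    have h3 : IndepFun (u k) (u l) μ :=
      hindep.indepFun (show (Sum.inl k : ℕ ⊕ ℕ) ≠ Sum.inl l by simp [hkl])
    have e2 : μ.map (fun ω => (s i ω, s j ω)) = νR.prod νR := by
      rw [(indepFun_iff_map_prod_eq_prod_map_map (hsmeas i).aemeasurable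
        (hsmeas j).aemeasurable).mp h2, hs i, hs j]
    have e3 : μ.map (fun ω => (u k ω, u l ω)) = νT.prod νT := by
      rw [(indepFun_iff_map_prod_eq_prod_map_map (humeas k).aemeasurable
        (humeas l).aemeasurable).mp h3, hu k, hu l]
    rw [(indepFun_iff_map_prod_eq_prod_map_map
      (((hsmeas i).prodMk (hsmeas j)).aemeasurable)
      (((humeas k).prodMk (humeas l)).aemeasurable)).mp h1, e2, e3]
  have hint : ∀ i j k l : ℕ, i ≠ j → k ≠ l →
      ∫ ω, Qfun L lam ((s i ω, s j ω), (u k ω, u l ω)) ∂μ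
        = ∫ z, Qfun L lam z ∂((νR.prod νR).prod (νT.prod νT)) := by
    intro i j k l hij hkl
    rw [← hmapW i j k l hij hkl,
      integral_map (hWmeas i j k l).aemeasurable
        (Qfun_measurable L lam).aestronglyMeasurable]
  have hEQm : ∀ i j k l : ℕ, i ≠ j → k ≠ l →
      ∫ ω, Qfun L lam ((s i ω, s j ω), (u k ω, u l ω)) ∂μ = m := by
    intro i j k l hij hkl
    rw [hint i j k l hij hkl, hm, hint 1 2 1 2 (by norm_num) (by norm_num)]
  -- integrability of products
  have hprodint : ∀ i j k l i' j' k' l' : ℕ,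
      Integrable (fun ω => Qfun L lam ((s i ω, s j ω), (u k ω, u l ω))
        * Qfun L lam ((s i' ω, s j' ω), (u k' ω, u l' ω))) μ := by
    intro i j k l i' j' k' l'
    refine Integrable.mono' (integrable_const (A * A))
      ((hQmeas i j k l).mul (hQmeas i' j' k' l')).aestronglyMeasurable ?_
    filter_upwards [haeQ i j k l, haeQ i' j' k' l'] with ω h h'
    rw [Real.norm_eq_abs, abs_mul]
    exact mul_le_mul h h' (abs_nonneg _) hA0
  have hpart : ∀ i j k l i' j' k' l' : ℕ,
      Integrable (fun ω => Qfun L lam ((s i ω, s j ω), (u k ω, u l ω))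
        * Qfun L lam ((s i' ω, s j' ω), (u k' ω, u l' ω))
        - m * Qfun L lam ((s i ω, s j ω), (u k ω, u l ω))
        - m * Qfun L lam ((s i' ω, s j' ω), (u k' ω, u l' ω))) μ := by
    intro i j k l i' j' k' l'
    exact ((hprodint i j k l i' j' k' l').sub
      ((hQint i j k l).const_mul m)).sub ((hQint i' j' k' l').const_mul m)
  have hXint : ∀ i j k l i' j' k' l' : ℕ,
      Integrable (fun ω => (Qfun L lam ((s i ω, s j ω), (u k ω, u l ω)) - m)
        * (Qfun L lam ((s i' ω, s j' ω), (u k' ω, u l' ω)) - m)) μ := by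
    intro i j k l i' j' k' l'
    have h3 : Integrable (fun ω => (Qfun L lam ((s i ω, s j ω), (u k ω, u l ω))
        * Qfun L lam ((s i' ω, s j' ω), (u k' ω, u l' ω))
        - m * Qfun L lam ((s i ω, s j ω), (u k ω, u l ω))
        - m * Qfun L lam ((s i' ω, s j' ω), (u k' ω, u l' ω))) + m * m) μ :=
      (hpart i j k l i' j' k' l').add (integrable_const (m * m))
    refine h3.congr (Filter.Eventually.of_forall fun ω => ?_)
    ring
  -- covariance upper bound
  have hcov_le : ∀ i j k l i' j' k' l' : ℕ, i ≠ j → k ≠ l → i' ≠ j' → k' ≠ l' →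
      ∫ ω, (Qfun L lam ((s i ω, s j ω), (u k ω, u l ω)) - m)
        * (Qfun L lam ((s i' ω, s j' ω), (u k' ω, u l' ω)) - m) ∂μ ≤ A ^ 2 := by
    intro i j k l i' j' k' l' hij hkl hij' hkl'
    have hexp : ∀ ω : Ω, (Qfun L lam ((s i ω, s j ω), (u k ω, u l ω)) - m)
        * (Qfun L lam ((s i' ω, s j' ω), (u k' ω, u l' ω)) - m)
        = (Qfun L lam ((s i ω, s j ω), (u k ω, u l ω))
              * Qfun L lam ((s i' ω, s j' ω), (u k' ω, u l' ω))
            - m * Qfun L lam ((s i ω, s j ω), (u k ω, u l ω))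
            - m * Qfun L lam ((s i' ω, s j' ω), (u k' ω, u l' ω))) + m * m := by
      intro ω; ring
    have heq : ∫ ω, (Qfun L lam ((s i ω, s j ω), (u k ω, u l ω)) - m)
        * (Qfun L lam ((s i' ω, s j' ω), (u k' ω, u l' ω)) - m) ∂μ
        = (∫ ω, Qfun L lam ((s i ω, s j ω), (u k ω, u l ω))
            * Qfun L lam ((s i' ω, s j' ω), (u k' ω, u l' ω)) ∂μ) - m * m := by
      rw [integral_congr_ae (Filter.Eventually.of_forall hexp)]
      have hpart1 : Integrable (fun ω => Qfun L lam ((s i ω, s j ω), (u k ω, u l ω))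
          * Qfun L lam ((s i' ω, s j' ω), (u k' ω, u l' ω))
          - m * Qfun L lam ((s i ω, s j ω), (u k ω, u l ω))) μ :=
        (hprodint i j k l i' j' k' l').sub ((hQint i j k l).const_mul m)
      rw [integral_add (hpart i j k l i' j' k' l') (integrable_const (m * m))]
      rw [integral_sub hpart1 ((hQint i' j' k' l').const_mul m)]
      rw [integral_sub (hprodint i j k l i' j' k' l') ((hQint i j k l).const_mul m)]
      rw [integral_const_mul, integral_const_mul, hEQm i j k l hij hkl,
        hEQm i' j' k' l' hij' hkl']
      simp only [integral_const, probReal_univ, one_smul]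
      ring
    rw [heq]
    have hQQ : ∫ ω, Qfun L lam ((s i ω, s j ω), (u k ω, u l ω))
        * Qfun L lam ((s i' ω, s j' ω), (u k' ω, u l' ω)) ∂μ ≤ A * A := by
      have h2 : ∫ ω, Qfun L lam ((s i ω, s j ω), (u k ω, u l ω))
          * Qfun L lam ((s i' ω, s j' ω), (u k' ω, u l' ω)) ∂μ ≤ ∫ _ : Ω, A * A ∂μ := by
        refine integral_mono_ae (hprodint i j k l i' j' k' l') (integrable_const (A * A)) ?_
        filter_upwards [haeQ i j k l, haeQ i' j' k' l'] with ω h h'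
        calc Qfun L lam ((s i ω, s j ω), (u k ω, u l ω))
              * Qfun L lam ((s i' ω, s j' ω), (u k' ω, u l' ω))
            ≤ |Qfun L lam ((s i ω, s j ω), (u k ω, u l ω))
                * Qfun L lam ((s i' ω, s j' ω), (u k' ω, u l' ω))| := le_abs_self _
          _ = |Qfun L lam ((s i ω, s j ω), (u k ω, u l ω))|
                * |Qfun L lam ((s i' ω, s j' ω), (u k' ω, u l' ω))| := abs_mul _ _
          _ ≤ A * A := mul_le_mul h h' (abs_nonneg _) hA0
      rw [integral_const, probReal_univ, one_smul] at h2
      exact h2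
    nlinarith [sq_nonneg m]
  -- zero covariance for doubly disjoint quadruples
  have hcov_zero : ∀ i j k l i' j' k' l' : ℕ, i ≠ j → k ≠ l → i' ≠ j' → k' ≠ l' →
      i ≠ i' → i ≠ j' → j ≠ i' → j ≠ j' → k ≠ k' → k ≠ l' → l ≠ k' → l ≠ l' →
      ∫ ω, (Qfun L lam ((s i ω, s j ω), (u k ω, u l ω)) - m)
        * (Qfun L lam ((s i' ω, s j' ω), (u k' ω, u l' ω)) - m) ∂μ = 0 := by
    intro i j k l i' j' k' l' hij hkl hij' hkl' d1 d2 d3 d4 d5 d6 d7 d8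
    have hST : Disjoint ({Sum.inr i, Sum.inr j, Sum.inl k, Sum.inl l} : Finset (ℕ ⊕ ℕ))
        {Sum.inr i', Sum.inr j', Sum.inl k', Sum.inl l'} :=
      disjoint_quad d1 d2 d3 d4 d5 d6 d7 d8
    let φ : ∀ (a b c d : ℕ ⊕ ℕ),
        (∀ _ : ({a, b, c, d} : Finset (ℕ ⊕ ℕ)), E2) → (E2 × E2) × (E2 × E2) :=
      fun a b c d v =>
        ((v ⟨a, by simp⟩, v ⟨b, by simp⟩), (v ⟨c, by simp⟩, v ⟨d, by simp⟩))
    have hφ : ∀ a b c d, Measurable (φ a b c d) := by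
      intro a b c d
      exact ((measurable_pi_apply _).prodMk (measurable_pi_apply _)).prodMk
        ((measurable_pi_apply _).prodMk (measurable_pi_apply _))
    have hWind : IndepFun (fun ω => ((s i ω, s j ω), (u k ω, u l ω)))
        (fun ω => ((s i' ω, s j' ω), (u k' ω, u l' ω))) μ :=
      (hindep.indepFun_finset _ _ hST hfmeas).comp
        (hφ (Sum.inr i) (Sum.inr j) (Sum.inl k) (Sum.inl l))
        (hφ (Sum.inr i') (Sum.inr j') (Sum.inl k') (Sum.inl l'))
    have hXind : IndepFun (fun ω => Qfun L lam ((s i ω, s j ω), (u k ω, u l ω)) - m)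
        (fun ω => Qfun L lam ((s i' ω, s j' ω), (u k' ω, u l' ω)) - m) μ :=
      hWind.comp ((Qfun_measurable L lam).sub measurable_const)
        ((Qfun_measurable L lam).sub measurable_const)
    have hmul : ∫ ω, (Qfun L lam ((s i ω, s j ω), (u k ω, u l ω)) - m)
          * (Qfun L lam ((s i' ω, s j' ω), (u k' ω, u l' ω)) - m) ∂μ
        = (∫ ω, (Qfun L lam ((s i ω, s j ω), (u k ω, u l ω)) - m) ∂μ)
          * ∫ ω, (Qfun L lam ((s i' ω, s j' ω), (u k' ω, u l' ω)) - m) ∂μ :=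
      hXind.integral_mul_eq_mul_integral
        (((hQmeas i j k l).sub measurable_const).aestronglyMeasurable)
        (((hQmeas i' j' k' l').sub measurable_const).aestronglyMeasurable)
    have hEX : ∫ ω, (Qfun L lam ((s i ω, s j ω), (u k ω, u l ω)) - m) ∂μ = 0 := by
      rw [integral_sub (hQint i j k l) (integrable_const m), hEQm i j k l hij hkl]
      simp
    have hEX' : ∫ ω, (Qfun L lam ((s i' ω, s j' ω), (u k' ω, u l' ω)) - m) ∂μ = 0 := by
      rw [integral_sub (hQint i' j' k' l') (integrable_const m),
        hEQm i' j' k' l' hij' hkl']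
      simp
    rw [hmul, hEX, hEX', mul_zero]
  -- rewrite the sums over pairs of quadruples and conclude
  have hrw : ∀ ω : Ω, (∑ i ∈ Finset.Icc 1 w, ∑ j ∈ Finset.Ioc i w,
      ∑ k ∈ Finset.Icc 1 w, ∑ l ∈ Finset.Ioc k w,
        (Qfun L lam ((s i ω, s j ω), (u k ω, u l ω)) - m))
      = ∑ t ∈ pairs w ×ˢ pairs w,
          (Qfun L lam ((s t.1.1 ω, s t.1.2 ω), (u t.2.1 ω, u t.2.2 ω)) - m) := by
    intro ω
    rw [sum_pairs_eq w (fun i j => ∑ k ∈ Finset.Icc 1 w, ∑ l ∈ Finset.Ioc k w,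
      (Qfun L lam ((s i ω, s j ω), (u k ω, u l ω)) - m))]
    rw [Finset.sum_product]
    exact Finset.sum_congr rfl fun p _ => sum_pairs_eq w (fun k l =>
      (Qfun L lam ((s p.1 ω, s p.2 ω), (u k ω, u l ω)) - m))
  have hmemne : ∀ t ∈ pairs w ×ˢ pairs w, t.1.1 ≠ t.1.2 ∧ t.2.1 ≠ t.2.2 := by
    intro t ht
    simp only [pairs, Finset.mem_product, Finset.mem_filter] at ht
    exact ⟨Nat.ne_of_lt ht.1.2, Nat.ne_of_lt ht.2.2⟩
  have hper : ∀ t ∈ pairs w ×ˢ pairs w,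
      (∑ t' ∈ pairs w ×ˢ pairs w,
        ∫ ω, (Qfun L lam ((s t.1.1 ω, s t.1.2 ω), (u t.2.1 ω, u t.2.2 ω)) - m)
          * (Qfun L lam ((s t'.1.1 ω, s t'.1.2 ω), (u t'.2.1 ω, u t'.2.2 ω)) - m) ∂μ)
        ≤ (((pairs w).card * (pairs w).card
            - (pairsD w 1 2).card * (pairsD w 1 2).card : ℕ) : ℝ) * A ^ 2 := by
    intro t ht
    obtain ⟨hne1, hne2⟩ := hmemne t ht
    rw [← Finset.sum_filter_add_sum_filter_not (pairs w ×ˢ pairs w) (fun t' => disjQ t t')]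
    have hzero : (∑ t' ∈ (pairs w ×ˢ pairs w).filter (fun t' => disjQ t t'),
        ∫ ω, (Qfun L lam ((s t.1.1 ω, s t.1.2 ω), (u t.2.1 ω, u t.2.2 ω)) - m)
          * (Qfun L lam ((s t'.1.1 ω, s t'.1.2 ω), (u t'.2.1 ω, u t'.2.2 ω)) - m) ∂μ) = 0 := by
      refine Finset.sum_eq_zero fun t' ht' => ?_
      rw [Finset.mem_filter] at ht'
      obtain ⟨hne1', hne2'⟩ := hmemne t' ht'.1
      have hd : (t.1.1 ≠ t'.1.1 ∧ t.1.1 ≠ t'.1.2 ∧ t.1.2 ≠ t'.1.1 ∧ t.1.2 ≠ t'.1.2) ∧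
          (t.2.1 ≠ t'.2.1 ∧ t.2.1 ≠ t'.2.2 ∧ t.2.2 ≠ t'.2.1 ∧ t.2.2 ≠ t'.2.2) := ht'.2
      obtain ⟨⟨e1, e2, e3, e4⟩, e5, e6, e7, e8⟩ := hd
      exact hcov_zero _ _ _ _ _ _ _ _ hne1 hne2 hne1' hne2' e1 e2 e3 e4 e5 e6 e7 e8
    rw [hzero, zero_add]
    calc (∑ t' ∈ (pairs w ×ˢ pairs w).filter (fun t' => ¬ disjQ t t'),
          ∫ ω, (Qfun L lam ((s t.1.1 ω, s t.1.2 ω), (u t.2.1 ω, u t.2.2 ω)) - m)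
            * (Qfun L lam ((s t'.1.1 ω, s t'.1.2 ω), (u t'.2.1 ω, u t'.2.2 ω)) - m) ∂μ)
        ≤ ((pairs w ×ˢ pairs w).filter (fun t' => ¬ disjQ t t')).card • A ^ 2 := by
          refine Finset.sum_le_card_nsmul _ _ _ fun t' ht' => ?_
          rw [Finset.mem_filter] at ht'
          obtain ⟨hne1', hne2'⟩ := hmemne t' ht'.1
          exact hcov_le _ _ _ _ _ _ _ _ hne1 hne2 hne1' hne2'
      _ = (((pairs w ×ˢ pairs w).filter (fun t' => ¬ disjQ t t')).card : ℝ) * A ^ 2 :=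
          nsmul_eq_mul _ _
      _ ≤ (((pairs w).card * (pairs w).card
            - (pairsD w 1 2).card * (pairsD w 1 2).card : ℕ) : ℝ) * A ^ 2 := by
          have hc := count_bound w hw t ht
          exact mul_le_mul_of_nonneg_right (Nat.cast_le.mpr hc) (by positivity)
  calc (∫ ω, (∑ i ∈ Finset.Icc 1 w, ∑ j ∈ Finset.Ioc i w,
        ∑ k ∈ Finset.Icc 1 w, ∑ l ∈ Finset.Ioc k w,
          (Qfun L lam ((s i ω, s j ω), (u k ω, u l ω)) - m)) ^ 2 ∂μ)
      = ∫ ω, ∑ t ∈ pairs w ×ˢ pairs w, ∑ t' ∈ pairs w ×ˢ pairs w,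
          (Qfun L lam ((s t.1.1 ω, s t.1.2 ω), (u t.2.1 ω, u t.2.2 ω)) - m)
          * (Qfun L lam ((s t'.1.1 ω, s t'.1.2 ω), (u t'.2.1 ω, u t'.2.2 ω)) - m) ∂μ := by
        have hfe : (fun ω => (∑ i ∈ Finset.Icc 1 w, ∑ j ∈ Finset.Ioc i w,
            ∑ k ∈ Finset.Icc 1 w, ∑ l ∈ Finset.Ioc k w,
              (Qfun L lam ((s i ω, s j ω), (u k ω, u l ω)) - m)) ^ 2)
            = fun ω => ∑ t ∈ pairs w ×ˢ pairs w, ∑ t' ∈ pairs w ×ˢ pairs w,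
              (Qfun L lam ((s t.1.1 ω, s t.1.2 ω), (u t.2.1 ω, u t.2.2 ω)) - m)
              * (Qfun L lam ((s t'.1.1 ω, s t'.1.2 ω), (u t'.2.1 ω, u t'.2.2 ω)) - m) := by
          funext ω
          rw [hrw ω, sq, Finset.sum_mul_sum]
        rw [hfe]
    _ = ∑ t ∈ pairs w ×ˢ pairs w, ∑ t' ∈ pairs w ×ˢ pairs w,
          ∫ ω, (Qfun L lam ((s t.1.1 ω, s t.1.2 ω), (u t.2.1 ω, u t.2.2 ω)) - m)
          * (Qfun L lam ((s t'.1.1 ω, s t'.1.2 ω), (u t'.2.1 ω, u t'.2.2 ω)) - m) ∂μ := by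
        rw [integral_finset_sum _ (fun t _ => integrable_finset_sum _ fun t' _ =>
          hXint t.1.1 t.1.2 t.2.1 t.2.2 t'.1.1 t'.1.2 t'.2.1 t'.2.2)]
        exact Finset.sum_congr rfl fun t _ => integral_finset_sum _ fun t' _ =>
          hXint t.1.1 t.1.2 t.2.1 t.2.2 t'.1.1 t'.1.2 t'.2.1 t'.2.2
    _ ≤ ∑ _t ∈ pairs w ×ˢ pairs w, (((pairs w).card * (pairs w).card
          - (pairsD w 1 2).card * (pairsD w 1 2).card : ℕ) : ℝ) * A ^ 2 :=
        Finset.sum_le_sum hper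
    _ = (((pairs w).card * (pairs w).card : ℕ) : ℝ) *
          ((((pairs w).card * (pairs w).card
            - (pairsD w 1 2).card * (pairsD w 1 2).card : ℕ) : ℝ) * A ^ 2) := by
        rw [Finset.sum_const, Finset.card_product, nsmul_eq_mul]
    _ ≤ 2 * (L / (L - D)) ^ 8 * ((w : ℝ) ^ 2 * ((w : ℝ) - 1) ^ 2 / 4) *
        (((w : ℝ) ^ 2 * ((w : ℝ) - 1) ^ 2 -
          ((w : ℝ) - 2) ^ 2 * ((w : ℝ) - 3) ^ 2) / 4) := by
        have h1mem : (1 : ℕ) ∈ Finset.Icc 1 w := by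
          simp only [Finset.mem_Icc]; omega
        have h2mem : (2 : ℕ) ∈ Finset.Icc 1 w := by
          simp only [Finset.mem_Icc]; omega
        have hfin := final_num w (pairs w).card (pairsD w 1 2).card hw (L / (L - D))
          (by positivity) (card_pairs w) (card_pairsD w 1 2 h1mem h2mem (by norm_num))
          (Finset.card_le_card (pairsD_subset w 1 2))
        rw [hA]
        exact hfin

end
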